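/- Let n be even and suppose L is a latin square of order n that agrees with B_n (entries (i+j) mod n) in all rows with index less than n − ⌊√n⌋. Then L has no transversal. -/
import Mathlib


open scoped Classical

/-- A latin square of order `n`: each symbol occurs exactly once in each row and column. -/
def IsLatinSquare {n : ℕ} (L : Fin n → Fin n → Fin n) : Prop :=
  (∀ i, Function.Bijective fun j => L i j) ∧ (∀ j, Function.Bijective fun i => L i j)

/-- A `k`-plex of `L`: a set of cells with exactly `k` in each row, `k` in each column,
and each symbol occurring exactly `k` times. -/
def IsPlex {n : ℕ} (L : Fin n → Fin n → Fin n) (k : ℕ) (K : Finset (Fin n × Fin n)) : Prop :=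
  (∀ i, (K.filter fun p => p.1 = i).card = k) ∧
  (∀ j, (K.filter fun p => p.2 = j).card = k) ∧
  (∀ s, (K.filter fun p => L p.1 p.2 = s).card = k)

/-- `L` has a transversal, i.e. a `1`-plex. -/
def HasTransversal {n : ℕ} (L : Fin n → Fin n → Fin n) : Prop :=
  ∃ K, IsPlex L 1 K

theorem stmt6 (n : ℕ) (hpos : 0 < n) (hn : Even n)
    (L : Fin n → Fin n → Fin n) (hL : IsLatinSquare L)
    (hagree : ∀ i j : Fin n, (i : ℕ) < n - Nat.sqrt n → L i j = i + j) :
    ¬ HasTransversal L := by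
  set m := Nat.sqrt n with hmdef
  have hm1 : 1 ≤ m := Nat.sqrt_pos.mpr hpos
  have hmn : m * m ≤ n := by
    have := Nat.sqrt_le' n
    simpa [pow_two] using this
  have hmlen : m ≤ n := le_trans (Nat.le_mul_of_pos_left m hm1) hmn
  have hn2 : 2 ≤ n := Nat.le_of_dvd hpos hn.two_dvd
  have hmn1 : m + 1 ≤ n := by
    rcases Nat.lt_or_ge m 2 with h | h
    · omega
    · nlinarith
  -- key claim: bottom-row entries in column j are ≡ j - e with 1 ≤ e ≤ m
  have key : ∀ (i j : Fin n), n - m ≤ (i : ℕ) →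
      ∃ e : ℕ, 1 ≤ e ∧ e ≤ m ∧ (((L i j : Fin n) : ℕ) : ZMod n) = ((j : ℕ) : ZMod n) - e := by
    intro i j hi
    set s := L i j with hs
    set t := ((s : ℕ) + n - (j : ℕ)) % n with ht
    have htn : t < n := Nat.mod_lt _ hpos
    have hjn : (j : ℕ) ≤ n := le_of_lt j.isLt
    have hteq : (t + (j : ℕ)) % n = (s : ℕ) := by
      rw [ht, Nat.mod_add_mod]
      have h1 : (s : ℕ) + n - (j : ℕ) + (j : ℕ) = (s : ℕ) + n := by omega
      rw [h1, Nat.add_mod_right, Nat.mod_eq_of_lt s.isLt]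
    by_cases htc : t < n - m
    · exfalso
      have htn' : t < n := htn
      set i' : Fin n := ⟨t, htn'⟩ with hi'
      have hLi' : L i' j = i' + j := hagree i' j htc
      have hval : L i' j = s := by
        apply Fin.ext
        rw [hLi']
        show ((i' : ℕ) + (j : ℕ)) % n = (s : ℕ)
        exact hteq
      have := (hL.2 j).injective (show (fun i => L i j) i' = (fun i => L i j) i from hval)
      have : (i : ℕ) = t := by rw [← this]
      omega
    · push_neg at htc
      refine ⟨n - t, by omega, by omega, ?_⟩
      have hcast : ∀ a : ℕ, a ≤ n → ((n - a : ℕ) : ZMod n) = -(a : ZMod n) := by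
        intro a ha
        have h1 : ((n - a : ℕ) : ZMod n) + (a : ZMod n) = ((n - a + a : ℕ) : ZMod n) := by
          push_cast; ring
        have h2 : n - a + a = n := by omega
        rw [h2] at h1
        have h3 : ((n : ℕ) : ZMod n) = 0 := ZMod.natCast_self n
        rw [h3] at h1
        exact eq_neg_of_add_eq_zero_left h1
      have h1 : (t : ZMod n) = ((s : ℕ) : ZMod n) - ((j : ℕ) : ZMod n) := by
        rw [ht, ZMod.natCast_mod]
        have h2 : (s : ℕ) + n - (j : ℕ) = (s : ℕ) + (n - (j : ℕ)) := by omega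
        rw [h2, Nat.cast_add, hcast _ hjn]
        ring
      rw [hcast _ (le_of_lt htn), h1]
      ring
  rintro ⟨K, hKr, hKc, hKs⟩
  -- choose the cell in each row
  have rowfun : ∀ i : Fin n, ∃ j : Fin n, (i, j) ∈ K := by
    intro i
    obtain ⟨⟨pi, pj⟩, hp⟩ := Finset.card_eq_one.mp (hKr i)
    have hpK : (pi, pj) ∈ K.filter fun p => p.1 = i := hp ▸ Finset.mem_singleton_self _
    rw [Finset.mem_filter] at hpK
    exact ⟨pj, hpK.2 ▸ hpK.1⟩
  choose f hf using rowfun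
  have colu : ∀ p ∈ K, ∀ q ∈ K, p.2 = q.2 → p = q := by
    intro p hp q hq hpq
    obtain ⟨r, hrr⟩ := Finset.card_eq_one.mp (hKc p.2)
    have h1 : p ∈ K.filter fun x => x.2 = p.2 := Finset.mem_filter.mpr ⟨hp, rfl⟩
    have h2 : q ∈ K.filter fun x => x.2 = p.2 := Finset.mem_filter.mpr ⟨hq, hpq.symm⟩
    rw [hrr, Finset.mem_singleton] at h1 h2
    rw [h1, h2]
  have symu : ∀ p ∈ K, ∀ q ∈ K, L p.1 p.2 = L q.1 q.2 → p = q := by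
    intro p hp q hq hpq
    obtain ⟨r, hrr⟩ := Finset.card_eq_one.mp (hKs (L p.1 p.2))
    have h1 : p ∈ K.filter fun x => L x.1 x.2 = L p.1 p.2 := Finset.mem_filter.mpr ⟨hp, rfl⟩
    have h2 : q ∈ K.filter fun x => L x.1 x.2 = L p.1 p.2 := Finset.mem_filter.mpr ⟨hq, hpq.symm⟩
    rw [hrr, Finset.mem_singleton] at h1 h2
    rw [h1, h2]
  have hfinj : Function.Injective f := by
    intro a b hab
    have := colu (a, f a) (hf a) (b, f b) (hf b) hab
    exact congrArg Prod.fst this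
  have hginj : Function.Injective (fun i => L i (f i)) := by
    intro a b hab
    have := symu (a, f a) (hf a) (b, f b) (hf b) hab
    exact congrArg Prod.fst this
  have hfb : Function.Bijective f := Finite.injective_iff_bijective.mp hfinj
  have hgb : Function.Bijective (fun i => L i (f i)) := Finite.injective_iff_bijective.mp hginj
  have hsum0 : ∑ i : Fin n, ((((L i (f i) : Fin n) : ℕ) : ZMod n) - (((f i : Fin n) : ℕ) : ZMod n)) = 0 := by
    rw [Finset.sum_sub_distrib]
    rw [hgb.sum_comp (fun x : Fin n => ((x : ℕ) : ZMod n)),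
        hfb.sum_comp (fun x : Fin n => ((x : ℕ) : ZMod n))]
    exact sub_self _
  set e : Fin n → ℕ := fun i => if h : n - m ≤ (i : ℕ) then (key i (f i) h).choose else 0 with he
  have he1 : ∀ i : Fin n, n - m ≤ (i : ℕ) →
      1 ≤ e i ∧ e i ≤ m ∧ (((L i (f i) : Fin n) : ℕ) : ZMod n) = (((f i : Fin n) : ℕ) : ZMod n) - e i := by
    intro i h
    simp only [he, dif_pos h]
    exact (key i (f i) h).choose_spec
  set S1 := Finset.univ.filter (fun i : Fin n => (i : ℕ) < n - m) with hS1def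
  set S2 := Finset.univ.filter (fun i : Fin n => ¬ (i : ℕ) < n - m) with hS2def
  set A := ∑ i ∈ S1, (i : ℕ) with hAdef
  set E := ∑ i ∈ S2, e i with hEdef
  have hsplit : ∑ i ∈ S1, ((((L i (f i) : Fin n) : ℕ) : ZMod n) - (((f i : Fin n) : ℕ) : ZMod n))
      + ∑ i ∈ S2, ((((L i (f i) : Fin n) : ℕ) : ZMod n) - (((f i : Fin n) : ℕ) : ZMod n)) = 0 := by
    rw [Finset.sum_filter_add_sum_filter_not]
    exact hsum0
  have hS1sum : ∑ i ∈ S1, ((((L i (f i) : Fin n) : ℕ) : ZMod n) - (((f i : Fin n) : ℕ) : ZMod n))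
      = (A : ZMod n) := by
    rw [hAdef, Nat.cast_sum]
    apply Finset.sum_congr rfl
    intro i hi
    rw [hS1def, Finset.mem_filter] at hi
    rw [hagree i (f i) hi.2]
    have h1 : (((i + f i : Fin n) : ℕ) : ZMod n) = ((i : ℕ) : ZMod n) + (((f i : Fin n) : ℕ) : ZMod n) := by
      rw [Fin.val_add, ZMod.natCast_mod]
      push_cast
      ring
    rw [h1]
    ring
  have hS2sum : ∑ i ∈ S2, ((((L i (f i) : Fin n) : ℕ) : ZMod n) - (((f i : Fin n) : ℕ) : ZMod n))
      = -(E : ZMod n) := by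
    rw [hEdef, Nat.cast_sum, ← Finset.sum_neg_distrib]
    apply Finset.sum_congr rfl
    intro i hi
    rw [hS2def, Finset.mem_filter] at hi
    obtain ⟨-, -, h3⟩ := he1 i (by omega)
    rw [h3]
    ring
  have hAE : (A : ZMod n) = (E : ZMod n) := by
    rw [hS1sum, hS2sum] at hsplit
    linear_combination hsplit
  have hmod : A ≡ E [MOD n] := (ZMod.natCast_eq_natCast_iff _ _ _).mp hAE
  obtain ⟨k, hk⟩ : ∃ k : ℤ, (E : ℤ) - (A : ℤ) = n * k := hmod.dvd
  -- card of S1 and S2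
  have hfilt : Finset.filter (fun t => t < n - m) (Finset.range n) = Finset.range (n - m) := by
    ext t
    simp only [Finset.mem_filter, Finset.mem_range]
    omega
  have hS1card : S1.card = n - m := by
    rw [hS1def, Finset.card_filter,
      Fin.sum_univ_eq_sum_range (fun t => if t < n - m then 1 else 0), ← Finset.card_filter,
      hfilt, Finset.card_range]
  have hS2card : S2.card = m := by
    have h := Finset.card_filter_add_card_filter_not
      (s := (Finset.univ : Finset (Fin n))) (p := fun i : Fin n => (i : ℕ) < n - m)
    rw [Finset.card_univ, Fintype.card_fin] at h
    rw [← hS1def, ← hS2def] at h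
    omega
  -- value of A
  have hA2 : A * 2 = (n - m) * (n - m - 1) := by
    have h1 : A = ∑ t ∈ Finset.range (n - m), t := by
      rw [hAdef, hS1def, Finset.sum_filter,
        Fin.sum_univ_eq_sum_range (fun t => if t < n - m then t else 0), ← Finset.sum_filter,
        hfilt]
    rw [h1, Finset.sum_range_id_mul_two]
  -- bounds on E
  have hE1 : m ≤ E := by
    have h := Finset.card_nsmul_le_sum S2 e 1 (fun i hi => by
      rw [hS2def, Finset.mem_filter] at hi
      exact (he1 i (by omega)).1)
    rw [hS2card] at h
    simpa using h
  have hE2 : E ≤ m * m := by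
    have h := Finset.sum_le_card_nsmul S2 e m (fun i hi => by
      rw [hS2def, Finset.mem_filter] at hi
      exact (he1 i (by omega)).2.1)
    rw [hS2card] at h
    simpa [mul_comm] using h
  -- pass to ℤ
  obtain ⟨c, hc⟩ := hn
  have hc1 : ((n - m : ℕ) : ℤ) = (n : ℤ) - m := by omega
  have hc2 : ((n - m - 1 : ℕ) : ℤ) = (n : ℤ) - m - 1 := by omega
  have hNc : (n : ℤ) = 2 * (c : ℤ) := by omega
  have h2A : 2 * (A : ℤ) = ((n : ℤ) - m) * ((n : ℤ) - m - 1) := by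
    calc 2 * (A : ℤ) = ((A * 2 : ℕ) : ℤ) := by push_cast; ring
      _ = (((n - m) * (n - m - 1) : ℕ) : ℤ) := by rw [hA2]
      _ = ((n : ℤ) - m) * ((n : ℤ) - m - 1) := by rw [Nat.cast_mul, hc1, hc2]
  have hE1' : (m : ℤ) ≤ (E : ℤ) := by exact_mod_cast hE1
  have hE2' : (E : ℤ) ≤ (m : ℤ) * m := by exact_mod_cast hE2
  have hMn' : (m : ℤ) * m ≤ (n : ℤ) := by exact_mod_cast hmn
  have hM1' : (1 : ℤ) ≤ (m : ℤ) := by exact_mod_cast hm1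
  have hT : (n : ℤ) + m * m + m - 2 * E = 2 * (n : ℤ) * (1 - k + m - c) := by
    linear_combination (-2 : ℤ) * hk - h2A - (n : ℤ) * hNc
  have hTpos : 0 < 2 * (n : ℤ) * (1 - k + m - c) := by
    rw [← hT]; linarith
  have hTlt : 2 * (n : ℤ) * (1 - k + m - c) < 2 * (n : ℤ) := by
    rw [← hT]; linarith
  rcases le_or_gt (1 - k + (m : ℤ) - c) 0 with h | h
  · have := mul_nonpos_of_nonneg_of_nonpos (by positivity : (0 : ℤ) ≤ 2 * (n : ℤ)) h
    linarith
  · have h1 : (1 : ℤ) ≤ 1 - k + (m : ℤ) - c := by omega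
    have := le_mul_of_one_le_right (by positivity : (0 : ℤ) ≤ 2 * (n : ℤ)) h1
    linarith
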